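/- (Antipode lemma.) Let S^n be the unit sphere with geodesic distance d, p ≥ 1, Φ_i(z) = −d(x_i,z)^p/p + b_i and Φ_j(z) = −d(x_j,z)^p/p + b_j with x_i ≠ x_j. If Φ_i(x_i') > Φ_j(x_i') at the antipode x_i' = −x_i, then Φ_i(z) > Φ_j(z) for every z ∈ S^n. -/

import Mathlib

open Real
open scoped RealInnerProductSpace

private lemma arccos_anti {u v : ℝ} (huv : u ≤ v) : Real.arccos v ≤ Real.arccos u := by
  simp only [Real.arccos]
  have := Real.monotone_arcsin huv
  linarith

/-- Triangle inequality for `arccos` of inner products of unit vectors. -/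
private lemma arccos_triangle {E : Type*} [NormedAddCommGroup E] [InnerProductSpace ℝ E]
    (x y z : E) (hx : ‖x‖ = 1) (hy : ‖y‖ = 1) (hz : ‖z‖ = 1) :
    Real.arccos ⟪x, z⟫ ≤ Real.arccos ⟪x, y⟫ + Real.arccos ⟪y, z⟫ := by
  set α := Real.arccos ⟪x, y⟫ with hα
  set β := Real.arccos ⟪y, z⟫ with hβ
  by_cases hπ : π ≤ α + β
  · exact le_trans (Real.arccos_le_pi _) hπ
  push_neg at hπ
  have hxy : |⟪x, y⟫| ≤ 1 := by
    simpa [hx, hy] using abs_real_inner_le_norm x y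
  have hyz : |⟪y, z⟫| ≤ 1 := by
    simpa [hy, hz] using abs_real_inner_le_norm y z
  obtain ⟨hxy1, hxy2⟩ := abs_le.mp hxy
  obtain ⟨hyz1, hyz2⟩ := abs_le.mp hyz
  have hcosα : Real.cos α = ⟪x, y⟫ := Real.cos_arccos hxy1 hxy2
  have hcosβ : Real.cos β = ⟪y, z⟫ := Real.cos_arccos hyz1 hyz2
  have hsinα : Real.sin α = Real.sqrt (1 - ⟪x, y⟫ ^ 2) := Real.sin_arccos _
  have hsinβ : Real.sin β = Real.sqrt (1 - ⟪y, z⟫ ^ 2) := Real.sin_arccos _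
  set u := x - ⟪x, y⟫ • y with hu
  set w := z - ⟪y, z⟫ • y with hw
  have hyy : ⟪y, y⟫ = (1 : ℝ) := by
    rw [real_inner_self_eq_norm_sq, hy]; norm_num
  have hxx : ⟪x, x⟫ = (1 : ℝ) := by
    rw [real_inner_self_eq_norm_sq, hx]; norm_num
  have hzz : ⟪z, z⟫ = (1 : ℝ) := by
    rw [real_inner_self_eq_norm_sq, hz]; norm_num
  have huw : ⟪u, w⟫ = ⟪x, z⟫ - ⟪x, y⟫ * ⟪y, z⟫ := by
    simp only [hu, hw, inner_sub_left, inner_sub_right, real_inner_smul_left,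
      real_inner_smul_right, hyy]
    rw [real_inner_comm y x]
    ring
  have hnu : ‖u‖ ^ 2 = 1 - ⟪x, y⟫ ^ 2 := by
    rw [← real_inner_self_eq_norm_sq]
    simp only [hu, inner_sub_left, inner_sub_right, real_inner_smul_left,
      real_inner_smul_right, hyy, hxx]
    rw [real_inner_comm y x]
    ring
  have hnw : ‖w‖ ^ 2 = 1 - ⟪y, z⟫ ^ 2 := by
    rw [← real_inner_self_eq_norm_sq]
    simp only [hw, inner_sub_left, inner_sub_right, real_inner_smul_left,
      real_inner_smul_right, hyy, hzz]
    rw [real_inner_comm y z]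
    ring
  have hnu' : ‖u‖ = Real.sqrt (1 - ⟪x, y⟫ ^ 2) := by
    rw [← hnu, Real.sqrt_sq (norm_nonneg _)]
  have hnw' : ‖w‖ = Real.sqrt (1 - ⟪y, z⟫ ^ 2) := by
    rw [← hnw, Real.sqrt_sq (norm_nonneg _)]
  have hbound : -(‖u‖ * ‖w‖) ≤ ⟪u, w⟫ := by
    have := abs_real_inner_le_norm u w
    have := abs_le.mp this
    linarith [this.1]
  have hkey : Real.cos (α + β) ≤ ⟪x, z⟫ := by
    rw [Real.cos_add, hcosα, hcosβ, hsinα, hsinβ]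
    have : ⟪x, z⟫ = ⟪x, y⟫ * ⟪y, z⟫ + ⟪u, w⟫ := by rw [huw]; ring
    rw [this]
    have : -(Real.sqrt (1 - ⟪x, y⟫ ^ 2) * Real.sqrt (1 - ⟪y, z⟫ ^ 2)) ≤ ⟪u, w⟫ := by
      rw [← hnu', ← hnw']; exact hbound
    linarith
  calc Real.arccos ⟪x, z⟫ ≤ Real.arccos (Real.cos (α + β)) := arccos_anti hkey
    _ = α + β := Real.arccos_cos
        (add_nonneg (Real.arccos_nonneg _) (Real.arccos_nonneg _)) (le_of_lt hπ)

/-- Convexity: difference of rpow increments is monotone. -/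
private lemma rpow_diff_mono {p : ℝ} (hp : 1 ≤ p) {a b d : ℝ} (ha : 0 ≤ a) (hab : a ≤ b)
    (hd : 0 ≤ d) : (a + d) ^ p - a ^ p ≤ (b + d) ^ p - b ^ p := by
  rcases eq_or_lt_of_le hd with rfl | hd'
  · simp
  rcases eq_or_lt_of_le hab with rfl | hab'
  · exact le_refl _
  have hcvx : ConvexOn ℝ (Set.Ici 0) fun x : ℝ => x ^ p := convexOn_rpow hp
  have hb : (0:ℝ) ≤ b := ha.trans hab
  have h1 := hcvx.secant_mono (Set.mem_Ici.mpr ha) (Set.mem_Ici.mpr (by linarith : (0:ℝ) ≤ a + d))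
    (Set.mem_Ici.mpr (by linarith : (0:ℝ) ≤ b + d)) (by linarith) (by linarith)
    (by linarith)
  have h2 := hcvx.secant_mono (Set.mem_Ici.mpr (by linarith : (0:ℝ) ≤ b + d))
    (Set.mem_Ici.mpr ha) (Set.mem_Ici.mpr hb) (by linarith) (by linarith) hab
  have e1 : (a + d) - a = d := by ring
  rw [e1] at h1
  have e2 : ((a:ℝ) ^ p - (b + d) ^ p) / (a - (b + d)) = ((b + d) ^ p - a ^ p) / (b + d - a) := by
    rw [← neg_div_neg_eq]; ring_nf
  rw [e2] at h2
  have e3 : ((b:ℝ) ^ p - (b + d) ^ p) / (b - (b + d)) = ((b + d) ^ p - b ^ p) / d := by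
    rw [← neg_div_neg_eq]; ring_nf
  rw [e3] at h2
  have := h1.trans h2
  have := (div_le_div_iff_of_pos_right hd').mp this
  linarith

theorem stmt7 (n : ℕ) (xi xj : EuclideanSpace ℝ (Fin (n + 1)))
    (hxi : ‖xi‖ = 1) (hxj : ‖xj‖ = 1) (hij : xi ≠ xj)
    (p : ℝ) (hp : 1 ≤ p) (bi bj : ℝ)
    (h : -(Real.arccos ⟪xj, -xi⟫) ^ p / p + bj < -(Real.arccos ⟪xi, -xi⟫) ^ p / p + bi) :
    ∀ z : EuclideanSpace ℝ (Fin (n + 1)), ‖z‖ = 1 →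
      -(Real.arccos ⟪xj, z⟫) ^ p / p + bj < -(Real.arccos ⟪xi, z⟫) ^ p / p + bi := by
  intro z hz
  -- abbreviations
  have hnxi : ‖(-xi : EuclideanSpace ℝ (Fin (n+1)))‖ = 1 := by rw [norm_neg, hxi]
  have hpi : Real.arccos ⟪xi, -xi⟫ = π := by
    have : ⟪xi, -xi⟫ = (-1 : ℝ) := by
      rw [inner_neg_right, real_inner_self_eq_norm_sq, hxi]; norm_num
    rw [this, Real.arccos_neg_one]
  rw [hpi] at h
  set a := Real.arccos ⟪xj, z⟫ with ha
  set t := Real.arccos ⟪xi, z⟫ with ht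
  set c := Real.arccos ⟪xj, -xi⟫ with hc
  have ha0 : 0 ≤ a := Real.arccos_nonneg _
  have ht0 : 0 ≤ t := Real.arccos_nonneg _
  have htπ : t ≤ π := Real.arccos_le_pi _
  have hc0 : 0 ≤ c := Real.arccos_nonneg _
  have hcπ : c ≤ π := Real.arccos_le_pi _
  -- triangle inequality: c ≤ a + (π - t)
  have hzxi : Real.arccos ⟪z, -xi⟫ = π - t := by
    rw [inner_neg_right, Real.arccos_neg, ht, real_inner_comm]
  have htri : c ≤ a + (π - t) := by
    have := arccos_triangle xj z (-xi) hxj hz hnxi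
    rw [hzxi] at this
    exact this
  -- key inequality: c^p + t^p ≤ a^p + π^p
  have hkey : c ^ p + t ^ p ≤ a ^ p + π ^ p := by
    set s := π - t with hs
    have hs0 : 0 ≤ s := by linarith
    by_cases hcs : c ≤ s
    · -- c + t ≤ π, so c^p + t^p ≤ (c+t)^p ≤ π^p, a^p ≥ 0
      have h1 : c ^ p + t ^ p ≤ (c + t) ^ p := by
        have := NNReal.add_rpow_le_rpow_add ⟨c, hc0⟩ ⟨t, ht0⟩ hp
        have h2 := NNReal.coe_le_coe.mpr this
        push_cast at h2
        convert h2 using 2 <;> rfl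
      have h2 : (c + t) ^ p ≤ π ^ p :=
        Real.rpow_le_rpow (by linarith) (by linarith) (by linarith)
      have h3 : (0:ℝ) ≤ a ^ p := Real.rpow_nonneg ha0 _
      linarith
    · push_neg at hcs
      have hca : c - s ≤ a := by linarith
      have hcs0 : 0 ≤ c - s := by linarith
      have hct : c - s ≤ t := by rw [hs]; linarith
      have hd := rpow_diff_mono hp hcs0 hct hs0
      have e1 : c - s + s = c := by ring
      have e2 : t + s = π := by rw [hs]; ring
      rw [e1, e2] at hd
      have h4 : (c - s) ^ p ≤ a ^ p := Real.rpow_le_rpow hcs0 hca (by linarith)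
      linarith
  -- conclude
  have hp0 : (0:ℝ) < p := by linarith
  rw [div_add' _ _ _ (ne_of_gt hp0), div_add' _ _ _ (ne_of_gt hp0)] at h ⊢
  rw [div_lt_div_iff_of_pos_right hp0] at h ⊢
  nlinarith [hkey]
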